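/- There exists a continuous map f : ℕ^ℕ → {0,1}^ℕ such that for every a ∈ ℕ^ℕ, the image f(a) is typical if and only if a_n → ∞ as n → ∞ (i.e. liminf_{n→∞} a_n = ∞). Consequently f⁻¹(TpcN) = P₃, where P₃ = {a ∈ ℕ^ℕ : a_n → ∞}. -/

import Mathlib

open Filter

open Classical in
/-- `L_n(x)`: the maximal length of a run of consecutive ones among the first `n`
digits (positions `1,…,n`) of the binary sequence `x`. -/
noncomputable def runL (x : ℕ → Bool) (n : ℕ) : ℕ :=
  Nat.findGreatest
    (fun j => ∃ i, i + j ≤ n ∧ ∀ k, 1 ≤ k → k ≤ j → x (i + k) = true) n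

/-- A binary sequence is typical if `L_n(x)/log₂ n → 1`. -/
def Typical (x : ℕ → Bool) : Prop :=
  Tendsto (fun n : ℕ => (runL x n : ℝ) / Real.logb 2 (n : ℝ)) atTop (nhds 1)

lemma le_runL_of {x : ℕ → Bool} {n m : ℕ} (hm : m ≤ n)
    (h : ∃ i, i + m ≤ n ∧ ∀ k, 1 ≤ k → k ≤ m → x (i + k) = true) :
    m ≤ runL x n :=
  @Nat.le_findGreatest m _ (fun _ => Classical.propDecidable _) n hm h

lemma runL_spec (x : ℕ → Bool) (n : ℕ) :
    ∃ i, i + runL x n ≤ n ∧ ∀ k, 1 ≤ k → k ≤ runL x n → x (i + k) = true :=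
  @Nat.findGreatest_spec 0 (fun j => ∃ i, i + j ≤ n ∧ ∀ k, 1 ≤ k → k ≤ j → x (i + k) = true)
    (fun _ => Classical.propDecidable _) n (Nat.zero_le n)
    ⟨0, by omega, fun k h1 h2 => absurd (h1.trans h2) (by omega)⟩

namespace TpcnAux

/-- The run-length control sequence: `mseq a 0 = 4`, and
`mseq a (s+1) = mseq a s + ⌈mseq a s / (a (s+1) + 1)⌉`-ish. -/
def mseq (a : ℕ → ℕ) : ℕ → ℕ
  | 0 => 4
  | s + 1 => mseq a s + (mseq a s + a (s + 1)) / (a (s + 1) + 1)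

/-- The reduction map: position `n` is a one iff it lies in the `s`-th run
`(2^{m_s} - m_s, 2^{m_s}]` for some `s ≥ 1`. -/
def fmap (a : ℕ → ℕ) (n : ℕ) : Bool :=
  decide (∃ s : Fin (n + 1), 1 ≤ s.1 ∧
    2 ^ mseq a s.1 - mseq a s.1 < n ∧ n ≤ 2 ^ mseq a s.1)

lemma mseq_succ (a : ℕ → ℕ) (s : ℕ) :
    mseq a (s + 1) = mseq a s + (mseq a s + a (s + 1)) / (a (s + 1) + 1) := rfl

lemma mseq_succ_lt (a : ℕ → ℕ) (s : ℕ) (h : 1 ≤ mseq a s) :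
    mseq a s + 1 ≤ mseq a (s + 1) := by
  rw [mseq_succ]
  have : 1 ≤ (mseq a s + a (s + 1)) / (a (s + 1) + 1) :=
    (Nat.one_le_div_iff (Nat.succ_pos _)).2 (by omega)
  omega

lemma mseq_ge (a : ℕ → ℕ) (s : ℕ) : s + 4 ≤ mseq a s := by
  induction s with
  | zero => simp [mseq]
  | succ s ih => have := mseq_succ_lt a s (by omega); omega

lemma mseq_mono (a : ℕ → ℕ) : StrictMono (mseq a) :=
  strictMono_nat_of_lt_succ fun s => by
    have := mseq_succ_lt a s (by have := mseq_ge a s; omega); omega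

lemma two_pow_sub_mono : Monotone (fun q : ℕ => 2 ^ q - q) := by
  apply monotone_nat_of_le_succ
  intro q
  have h1 : q + 1 ≤ 2 ^ q := Nat.lt_two_pow_self (n := q)
  have : 2 ^ (q + 1) = 2 ^ q + 2 ^ q := by ring
  omega

lemma aux_two_pow (q : ℕ) (h : 3 ≤ q) : q + 1 ≤ 2 ^ (q - 1) := by
  induction q with
  | zero => omega
  | succ q ih =>
    rcases Nat.lt_or_ge q 3 with h'|h'
    · interval_cases q <;> simp_all <;> omega
    · have := ih (by omega)
      have : 2 ^ (q + 1 - 1) = 2 ^ (q-1) * 2 := by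
        rw [← pow_succ]; congr 1; omega
      omega

/-- Separation: run `s+1` starts strictly after run `s` ends, with a gap. -/
lemma sep (a : ℕ → ℕ) (s : ℕ) :
    2 ^ mseq a s + 1 ≤ 2 ^ mseq a (s + 1) - mseq a (s + 1) := by
  set q := mseq a (s + 1) with hq
  have h1 : mseq a s + 1 ≤ q := mseq_succ_lt a s (by have := mseq_ge a s; omega)
  have h2 : 5 ≤ q := by have := mseq_ge a (s+1); omega
  have h3 : q + 1 ≤ 2 ^ (q - 1) := aux_two_pow q (by omega)
  have h4 : 2 ^ q = 2 ^ (q - 1) * 2 := by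
    rw [← pow_succ]; congr 1; omega
  have h5 : 2 ^ mseq a s ≤ 2 ^ (q - 1) :=
    Nat.pow_le_pow_right (by norm_num) (by omega)
  omega

/-- For `t < t'`, run `t` ends (at `2^{m_t}`) strictly before run `t'` begins. -/
lemma sep' (a : ℕ → ℕ) {t t' : ℕ} (h : t < t') :
    2 ^ mseq a t + 1 ≤ 2 ^ mseq a t' - mseq a t' := by
  have h1 := sep a t
  have h2 : 2 ^ mseq a (t+1) - mseq a (t+1) ≤ 2 ^ mseq a t' - mseq a t' :=
    two_pow_sub_mono (mseq_mono a |>.monotone h)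
  omega

/-- Membership of position `p` in run `t`. -/
def Run (a : ℕ → ℕ) (t p : ℕ) : Prop :=
  2 ^ mseq a t - mseq a t < p ∧ p ≤ 2 ^ mseq a t

lemma two_mul_le_pow : ∀ m : ℕ, 2 * m ≤ 2 ^ m := by
  intro m
  induction m with
  | zero => norm_num
  | succ m ih =>
    rcases Nat.eq_zero_or_pos m with h | h
    · subst h; norm_num
    · have h2 : 2 ≤ 2 ^ m := by
        calc 2 = 2 ^ 1 := rfl
        _ ≤ 2 ^ m := Nat.pow_le_pow_right (by norm_num) h
      have : 2 ^ (m + 1) = 2 ^ m * 2 := pow_succ 2 m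
      omega

lemma run_gt (a : ℕ → ℕ) {t p : ℕ} (h : Run a t p) : t < p := by
  obtain ⟨h1, h2⟩ := h
  have hm : t + 4 ≤ mseq a t := mseq_ge a t
  have h4 : 2 * mseq a t ≤ 2 ^ mseq a t := two_mul_le_pow _
  omega

lemma fmap_iff (a : ℕ → ℕ) (p : ℕ) :
    fmap a p = true ↔ ∃ t, 1 ≤ t ∧ Run a t p := by
  rw [fmap, decide_eq_true_eq]
  constructor
  · rintro ⟨s, h1, h2, h3⟩; exact ⟨s.1, h1, h2, h3⟩
  · rintro ⟨t, h1, h2⟩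
    exact ⟨⟨t, Nat.lt_succ_of_lt (run_gt a h2)⟩, h1, h2.1, h2.2⟩

lemma run_adj (a : ℕ → ℕ) {t t' p : ℕ} (h : Run a t p) (h' : Run a t' (p + 1)) :
    t = t' := by
  rcases lt_trichotomy t t' with hlt | heq | hgt
  · have := sep' a hlt
    obtain ⟨h1, _⟩ := h'
    obtain ⟨_, h2⟩ := h
    omega
  · exact heq
  · have := sep' a hgt
    obtain ⟨h1, _⟩ := h
    obtain ⟨_, h2⟩ := h'
    omega

/-- A block of consecutive ones lies in a single run. -/
lemma ones_in_run (a : ℕ → ℕ) {i j : ℕ} (hj : 1 ≤ j)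
    (h : ∀ k, 1 ≤ k → k ≤ j → fmap a (i + k) = true) :
    ∃ t, 1 ≤ t ∧ ∀ k, 1 ≤ k → k ≤ j → Run a t (i + k) := by
  obtain ⟨t, ht1, ht2⟩ := (fmap_iff a (i + 1)).1 (h 1 le_rfl hj)
  refine ⟨t, ht1, ?_⟩
  intro k hk1 hk2
  induction k with
  | zero => omega
  | succ k ih =>
    rcases Nat.eq_or_lt_of_le hk1 with h0 | h0
    · simpa [← h0] using ht2
    · have hk : 1 ≤ k := by omega
      have hr := ih hk (by omega)
      obtain ⟨t', ht1', ht2'⟩ := (fmap_iff a (i + (k+1))).1 (h (k+1) hk1 hk2)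
      have : t = t' := run_adj a hr (by rw [show i + k + 1 = i + (k+1) by omega]; exact ht2')
      rw [this, show i + (k+1) = i + k + 1 by omega] at *
      exact ht2'

-- lower bound: if run s is complete within [1,n], then runL ≥ m_s
lemma le_runL (a : ℕ → ℕ) {s n : ℕ} (hs : 1 ≤ s) (hn : 2 ^ mseq a s ≤ n) :
    mseq a s ≤ runL (fmap a) n := by
  have hm : mseq a s ≤ 2 ^ mseq a s := Nat.le_of_lt (Nat.lt_two_pow_self)
  apply le_runL_of (le_trans hm hn)
  refine ⟨2 ^ mseq a s - mseq a s, by omega, ?_⟩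
  intro k hk1 hk2
  rw [fmap_iff]
  exact ⟨s, hs, by omega, by omega⟩

-- upper bound
lemma runL_le (a : ℕ → ℕ) {s n : ℕ}
    (hn : n ≤ 2 ^ mseq a (s + 1) - mseq a (s + 1)) :
    runL (fmap a) n ≤ mseq a s := by
  by_contra hcon
  push_neg at hcon
  have hpos : 0 < runL (fmap a) n := by
    have := mseq_ge a s; omega
  obtain ⟨i, hin, hones⟩ := runL_spec (fmap a) n
  set j := runL (fmap a) n with hj
  have hj1 : 1 ≤ j := hpos
  obtain ⟨t, ht1, ht2⟩ := ones_in_run a hj1 hones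
  have hfirst := ht2 1 le_rfl hj1
  have hlast := ht2 j hj1 le_rfl
  -- j ≤ m_t
  have hjle : j ≤ mseq a t := by
    obtain ⟨hf1, _⟩ := hfirst
    obtain ⟨_, hl2⟩ := hlast
    have : mseq a t ≤ 2 ^ mseq a t := Nat.le_of_lt (Nat.lt_two_pow_self)
    omega
  -- t ≤ s
  have hts : t ≤ s := by
    by_contra hts
    push_neg at hts
    have h1 : 2 ^ mseq a (s+1) - mseq a (s+1) ≤ 2 ^ mseq a t - mseq a t := by
      rcases eq_or_lt_of_le (show s + 1 ≤ t from hts) with h | h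
      · rw [h]
      · have := sep' a h
        have h2 : mseq a (s+1) ≤ 2 ^ mseq a (s+1) := Nat.le_of_lt (Nat.lt_two_pow_self)
        omega
    obtain ⟨hf1, _⟩ := hfirst
    omega
  have := mseq_mono a |>.monotone hts
  omega

lemma mseq_continuous (s : ℕ) : Continuous fun a : ℕ → ℕ => mseq a s := by
  induction s with
  | zero => exact continuous_const
  | succ s ih =>
    have h1 : Continuous fun a : ℕ → ℕ => a (s + 1) := continuous_apply _
    have : (fun a : ℕ → ℕ => mseq a (s + 1)) =
        (fun p : ℕ × ℕ => p.1 + (p.1 + p.2) / (p.2 + 1)) ∘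
          fun a => (mseq a s, a (s + 1)) := rfl
    rw [this]
    exact continuous_of_discreteTopology.comp (ih.prodMk h1)

lemma fmap_continuous : Continuous fmap := by
  apply continuous_pi
  intro n
  have : (fun a => fmap a n) =
      (fun v : Fin (n + 1) → ℕ =>
        decide (∃ s : Fin (n + 1), 1 ≤ s.1 ∧ 2 ^ v s - v s < n ∧ n ≤ 2 ^ v s)) ∘
        fun a s => mseq a s.1 := rfl
  rw [this]
  exact continuous_of_discreteTopology.comp (continuous_pi fun s => mseq_continuous s.1)

lemma logb_nat_pow (p : ℕ) : Real.logb 2 ((2:ℝ) ^ p) = p := by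
  rw [Real.logb_pow, Real.logb_self_eq_one (by norm_num), mul_one]

lemma le_logb {p n : ℕ} (h : 2 ^ p ≤ n) : (p : ℝ) ≤ Real.logb 2 (n : ℝ) := by
  have h2 : ((2:ℝ)) ^ p ≤ (n : ℝ) := by exact_mod_cast h
  calc (p : ℝ) = Real.logb 2 ((2:ℝ) ^ p) := (logb_nat_pow p).symm
    _ ≤ Real.logb 2 (n : ℝ) := by
        gcongr <;> first | norm_num | positivity

lemma logb_le {n q : ℕ} (h : n ≤ 2 ^ q) : Real.logb 2 (n : ℝ) ≤ (q : ℝ) := by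
  rcases Nat.eq_zero_or_pos n with h0 | h0
  · subst h0
    simp [Real.logb]
    try positivity
  · have h2 : (n : ℝ) ≤ (2:ℝ) ^ q := by exact_mod_cast h
    calc Real.logb 2 (n : ℝ) ≤ Real.logb 2 ((2:ℝ) ^ q) := by
          gcongr <;> first | norm_num | exact_mod_cast h0
      _ = q := logb_nat_pow q

lemma nat_div_ge (m c : ℕ) (hc : 0 < c) :
    (m : ℝ) / c - 1 ≤ ((m / c : ℕ) : ℝ) := by
  have h1 := Nat.div_add_mod m c
  have h2 : m % c < c := Nat.mod_lt _ hc
  have hc' : (0:ℝ) < c := by exact_mod_cast hc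
  have h1' : (c : ℝ) * ((m / c : ℕ) : ℝ) + ((m % c : ℕ) : ℝ) = m := by exact_mod_cast h1
  have h2' : ((m % c : ℕ) : ℝ) < c := by exact_mod_cast h2
  rw [sub_le_iff_le_add, div_le_iff₀ hc']
  nlinarith

lemma nat_div_le (m c : ℕ) : ((m / c : ℕ) : ℝ) ≤ (m : ℝ) / c := Nat.cast_div_le

lemma typical_of_tendsto (a : ℕ → ℕ) (ha : Tendsto a atTop atTop) :
    Tendsto (fun n : ℕ => (runL (fmap a) n : ℝ) / Real.logb 2 (n : ℝ))
      atTop (nhds 1) := by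
  rw [Metric.tendsto_atTop]
  intro ε hε
  obtain ⟨T, hT⟩ := exists_nat_gt (2 / ε)
  have hT0 : 0 < T := by
    by_contra h
    push_neg at h
    interval_cases T
    have : (0:ℝ) < 2 / ε := by positivity
    simp at hT
    linarith
  obtain ⟨S₀, hS₀⟩ := tendsto_atTop_atTop.mp ha T
  set S := max S₀ T + 1 with hS
  refine ⟨2 ^ mseq a (S + 1), ?_⟩
  intro n hn
  have hn' : 2 ^ mseq a (S + 1) ≤ n := hn
  -- locate n between consecutive run-ends
  set s := Nat.findGreatest (fun t => 2 ^ mseq a t ≤ n) n with hsdef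
  have hSn : S + 1 ≤ n := by
    have h1 := mseq_ge a (S + 1)
    have h2 : mseq a (S+1) < 2 ^ mseq a (S+1) := Nat.lt_two_pow_self
    omega
  have hsS : S + 1 ≤ s :=
    Nat.le_findGreatest (P := fun t => 2 ^ mseq a t ≤ n) hSn hn'
  have hs1 : 1 ≤ s := by omega
  have hsn : 2 ^ mseq a s ≤ n :=
    Nat.findGreatest_spec (P := fun t => 2 ^ mseq a t ≤ n) (m := S + 1) hSn hn'
  have hlt : n < 2 ^ mseq a (s + 1) := by
    by_contra h
    push_neg at h
    have hn1 : s + 1 ≤ n := by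
      have h1 := mseq_ge a (s + 1)
      have h2 : mseq a (s+1) < 2 ^ mseq a (s+1) := Nat.lt_two_pow_self
      omega
    have := Nat.le_findGreatest (P := fun t => 2 ^ mseq a t ≤ n) hn1 h
    omega
  clear hsdef
  clear_value s
  -- runL and logb bounds
  have hr1 : mseq a s ≤ runL (fmap a) n := le_runL a hs1 hsn
  have hr2 : runL (fmap a) n ≤ mseq a (s + 1) := by
    apply runL_le a (s := s + 1)
    have := sep a (s + 1)
    omega
  have hl1 : (mseq a s : ℝ) ≤ Real.logb 2 (n : ℝ) := le_logb hsn
  have hl2 : Real.logb 2 (n : ℝ) ≤ (mseq a (s + 1) : ℝ) := logb_le (le_of_lt hlt)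
  set A := (mseq a s : ℝ) with hA
  set B := (mseq a (s + 1) : ℝ) with hB
  have hA4 : (4:ℝ) ≤ A := by
    have h1 := mseq_ge a s
    have h2 : (4:ℕ) ≤ mseq a s := by omega
    rw [hA]; exact_mod_cast h2
  have hA0 : (0:ℝ) < A := by linarith
  have hAB : A ≤ B := by
    have := (mseq_mono a).monotone (Nat.le_succ s)
    rw [hA, hB]; exact_mod_cast this
  have hB0 : (0:ℝ) < B := by linarith
  have hlogb0 : (0:ℝ) < Real.logb 2 (n : ℝ) := by linarith
  have hru : ((runL (fmap a) n : ℕ) : ℝ) ≤ B := by rw [hB]; exact_mod_cast hr2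
  have hrl : A ≤ ((runL (fmap a) n : ℕ) : ℝ) := by rw [hA]; exact_mod_cast hr1
  set r := ((runL (fmap a) n : ℕ) : ℝ) with hrdef
  clear_value r
  clear hr1 hr2 hrdef
  set ac := (a (s+1) : ℝ) with hac
  have hac0 : (0:ℝ) ≤ ac := Nat.cast_nonneg _
  -- growth bound : B - A ≤ A / (ac + 1) + 1
  have hdiff : B - A ≤ A / (ac + 1) + 1 := by
    have h1 : mseq a (s+1) - mseq a s = (mseq a s + a (s+1)) / (a (s+1) + 1) := by
      rw [mseq_succ]; exact Nat.add_sub_cancel_left _ _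
    have hmono := (mseq_mono a).monotone (Nat.le_succ s)
    have h3 : B - A = (((mseq a s + a (s+1)) / (a (s+1) + 1) : ℕ) : ℝ) := by
      rw [hA, hB, ← h1, Nat.cast_sub hmono]
    have h2 : (((mseq a s + a (s+1)) / (a (s+1) + 1) : ℕ) : ℝ) ≤
        (A + ac) / (ac + 1) := by
      have h4 := nat_div_le (mseq a s + a (s+1)) (a (s+1) + 1)
      rw [hA, hac]
      push_cast at h4 ⊢
      exact h4
    have h5 : (A + ac) / (ac + 1) ≤ (A + (ac + 1)) / (ac + 1) := by
      gcongr
      linarith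
    have h6 : (A + (ac + 1)) / (ac + 1) = A / (ac + 1) + 1 := by
      field_simp
    linarith [h3 ▸ h2]
  -- smallness
  have hT0' : (0:ℝ) < T := by exact_mod_cast hT0
  have haT : (T : ℝ) ≤ ac := by
    have h1 : T ≤ a (s+1) := hS₀ (s+1) (by omega)
    rw [hac]; exact_mod_cast h1
  have hTA : (T:ℝ) ≤ A := by
    have h1 : T ≤ mseq a s := by
      have := mseq_ge a s
      omega
    rw [hA]; exact_mod_cast h1
  have hBA : B - A < A * ε := by
    have h1 : A / (ac + 1) ≤ A / T := by
      gcongr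
      all_goals linarith
    have h2 : (1:ℝ) ≤ A / T := (one_le_div hT0').2 hTA
    have h3 : A / T < A * (ε / 2) := by
      rw [div_lt_iff₀ hT0']
      have hTe : (2:ℝ) < ↑T * ε := by
        rw [div_lt_iff₀ hε] at hT
        linarith
      nlinarith [mul_lt_mul_of_pos_left hTe hA0]
    nlinarith
  -- conclude
  rw [Real.dist_eq, abs_sub_lt_iff]
  constructor
  · have hub : r / Real.logb 2 (n:ℝ) ≤ B / A :=
      div_le_div₀ hB0.le hru hA0 hl1
    have hBA2 : B / A - 1 < ε := by
      rw [div_sub_one (ne_of_gt hA0), div_lt_iff₀ hA0]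
      rw [mul_comm]
      exact hBA
    linarith
  · have hlb : A / B ≤ r / Real.logb 2 (n:ℝ) :=
      div_le_div₀ (by linarith) hrl hlogb0 hl2
    have hBA2 : 1 - A / B < ε := by
      have he : 1 - A / B = (B - A) / B := by field_simp
      rw [he, div_lt_iff₀ hB0]
      nlinarith
    linarith

lemma not_typical_of_not_tendsto (a : ℕ → ℕ) (hb : ¬ Tendsto a atTop atTop) :
    ¬ Tendsto (fun n : ℕ => (runL (fmap a) n : ℝ) / Real.logb 2 (n : ℝ))
      atTop (nhds 1) := by
  intro ht
  rw [tendsto_atTop_atTop] at hb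
  push_neg at hb
  obtain ⟨C, hC⟩ := hb
  set c := (C : ℝ) with hcdef
  have hc0 : (0:ℝ) ≤ c := Nat.cast_nonneg _
  set η : ℝ := 1 / (2 * (c + 2)) with hη
  have hη0 : 0 < η := by positivity
  have hη1 : 1 - η < 1 := by linarith
  have hev := ht.eventually (lt_mem_nhds hη1)
  rw [eventually_atTop] at hev
  obtain ⟨N, hN⟩ := hev
  -- pick a bad index k ≥ max N (4*C+23)
  obtain ⟨k, hk1, hk2⟩ := hC (max N (4*C+23))
  have hkN : N ≤ k := le_trans (le_max_left _ _) hk1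
  have hkC : 4*C+23 ≤ k := le_trans (le_max_right _ _) hk1
  have hk3 : 2 ≤ k := by omega
  set s := k - 1 with hsdef
  have hks : k = s + 1 := by omega
  have hs1 : 1 ≤ s := by omega
  rw [hks] at hk2   -- a (s+1) < C
  -- the dip point
  set n₀ := 2 ^ mseq a (s+1) - mseq a (s+1) with hn₀
  have hq := mseq_ge a (s+1)
  have hq2 : mseq a (s+1) < 2 ^ mseq a (s+1) := Nat.lt_two_pow_self
  -- n₀ ≥ 2^(m(s+1)-1)
  have hpow : 2 ^ (mseq a (s+1) - 1) ≤ n₀ := by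
    have h1 : mseq a (s+1) + 1 ≤ 2 ^ (mseq a (s+1) - 1) := aux_two_pow _ (by omega)
    have h2 : 2 ^ mseq a (s+1) = 2 ^ (mseq a (s+1) - 1) * 2 := by
      rw [← pow_succ]; congr 1; omega
    omega
  -- N ≤ n₀
  have hn₀N : N ≤ n₀ := by
    have h3 : k < 2 ^ k := Nat.lt_two_pow_self
    have h4 : 2 ^ k ≤ 2 ^ (mseq a (s+1) - 1) := Nat.pow_le_pow_right (by norm_num) (by omega)
    omega
  have hcontra := hN n₀ hn₀N
  -- runL value at the dip
  have hr2 : runL (fmap a) n₀ ≤ mseq a s := runL_le a le_rfl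
  -- logb lower bound
  have hl1 : ((mseq a (s+1) - 1 : ℕ) : ℝ) ≤ Real.logb 2 (n₀ : ℝ) := le_logb hpow
  -- growth at the bad step
  have hgrow : (C + 1) * (mseq a (s+1) - mseq a s) + C ≥ mseq a s := by
    have hd : mseq a (s+1) - mseq a s = (mseq a s + a (s+1)) / (a (s+1) + 1) := by
      rw [mseq_succ]; exact Nat.add_sub_cancel_left _ _
    have h5 : mseq a s / (C + 1) ≤ (mseq a s + a (s+1)) / (a (s+1) + 1) := by
      calc mseq a s / (C + 1) ≤ mseq a s / (a (s+1) + 1) :=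
            Nat.div_le_div_left (by omega) (by omega)
        _ ≤ (mseq a s + a (s+1)) / (a (s+1) + 1) :=
            Nat.div_le_div_right (by omega)
      -- note: check names
    have h6 := Nat.div_add_mod (mseq a s) (C + 1)
    have h7 : mseq a s % (C + 1) < C + 1 := Nat.mod_lt _ (by omega)
    have h8 : (C+1) * (mseq a s / (C+1)) + C ≥ mseq a s := by omega
    calc (C + 1) * (mseq a (s+1) - mseq a s) + C
        ≥ (C + 1) * (mseq a s / (C + 1)) + C := by
          have := hd ▸ h5
          exact Nat.add_le_add_right (Nat.mul_le_mul_left _ this) C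
      _ ≥ mseq a s := h8
  -- real versions
  set A := (mseq a s : ℝ) with hA
  set B := (mseq a (s+1) : ℝ) with hB
  have hAcast : ((mseq a (s+1) - 1 : ℕ) : ℝ) = B - 1 := by
    rw [hB]; push_cast [Nat.cast_sub (by omega : 1 ≤ mseq a (s+1))]; ring
  have hABmono : mseq a s < mseq a (s+1) := mseq_mono a (Nat.lt_succ_self s)
  have hABr : A + 1 ≤ B := by
    rw [hA, hB]; exact_mod_cast hABmono
  have hA4 : (4:ℝ)*c + 23 ≤ A := by
    have h9 : 4*C + 23 ≤ mseq a s := by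
      have := mseq_ge a s
      omega
    rw [hA, hcdef]; exact_mod_cast h9
  have hA0 : (0:ℝ) < A := by linarith
  have hgrowr : (c + 1) * (B - A) + c ≥ A := by
    have h10 : ((C + 1) * (mseq a (s+1) - mseq a s) + C : ℕ) ≥ (mseq a s : ℕ) := hgrow
    have h11 : ((mseq a (s+1) - mseq a s : ℕ) : ℝ) = B - A := by
      rw [hA, hB, Nat.cast_sub (le_of_lt hABmono)]
    have h12 : (((C + 1) * (mseq a (s+1) - mseq a s) + C : ℕ) : ℝ) ≥ A := by
      rw [hA]; exact_mod_cast h10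
    push_cast at h12
    rw [hA] at h11 ⊢
    push_cast at h11
    rw [hcdef]
    push_cast
    nlinarith [h11, h12]
  -- final contradiction : ratio at n₀ is ≤ 1 - η
  have hlogpos : (0:ℝ) < Real.logb 2 (n₀ : ℝ) := by
    rw [← hAcast] at *
    have : ((mseq a (s+1) - 1 : ℕ) : ℝ) ≥ 4 := by
      have : (4:ℕ) ≤ mseq a (s+1) - 1 := by omega
      exact_mod_cast this
    linarith
  have hrK : (runL (fmap a) n₀ : ℝ) ≤ A := by rw [hA]; exact_mod_cast hr2
  have hB1 : (0:ℝ) < B - 1 := by linarith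
  have hrat : (runL (fmap a) n₀ : ℝ) / Real.logb 2 (n₀ : ℝ) ≤ A / (B - 1) := by
    apply div_le_div₀ hA0.le hrK hB1
    rw [← hAcast]; exact hl1
  have hkey : A / (B - 1) ≤ 1 - η := by
    have hc2 : (0:ℝ) < 2*(c+2) := by linarith
    have h1η : 1 - η = (2*c+3)/(2*(c+2)) := by
      rw [hη]; field_simp; ring
    rw [div_le_iff₀ hB1, h1η, div_mul_eq_mul_div, le_div_iff₀ hc2]
    nlinarith [hgrowr, hABr, hA4, hc0]
  linarith [hcontra, hrat.trans hkey]

end TpcnAux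

/-- There is a continuous map `f : ℕ^ℕ → {0,1}^ℕ` (Baire space to Cantor space,
both with product topologies) such that `f a` is typical iff `a_n → ∞`;
consequently `f⁻¹(TpcN) = P₃ = {a : a_n → ∞}`. -/
theorem tpcn_reduction :
    ∃ f : (ℕ → ℕ) → (ℕ → Bool), Continuous f ∧
      (∀ a : ℕ → ℕ, Typical (f a) ↔ Tendsto a atTop atTop) ∧
      f ⁻¹' {x : ℕ → Bool | Typical x} = {a : ℕ → ℕ | Tendsto a atTop atTop} := by
  have key : ∀ a : ℕ → ℕ, Typical (TpcnAux.fmap a) ↔ Tendsto a atTop atTop := by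
    intro a
    constructor
    · intro h
      by_contra hb
      exact TpcnAux.not_typical_of_not_tendsto a hb h
    · exact TpcnAux.typical_of_tendsto a
  refine ⟨TpcnAux.fmap, TpcnAux.fmap_continuous, key, ?_⟩
  ext a
  simp only [Set.mem_preimage, Set.mem_setOf_eq]
  exact key a
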